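/- Let R be a commutative ring and t ∈ R. If (A_i, φ_{ji}) is a Mittag-Leffler directed inverse system of R-modules, then the localized system (A_i ⊗_R R[1/t]) with the induced transition maps is again Mittag-Leffler. Moreover, if (B_i, φ_{ji}) is a directed inverse system of R-modules with A_i ⊆ B_i compatibly with the transition maps and (A_i) ⊨ (B_i), then (A_i ⊗_R R[1/t]) ⊨ (B_i ⊗_R R[1/t]). -/

import Mathlib

lemma range_baseChange' {R A M N : Type*} [CommRing R] [CommRing A] [Algebra R A]
    [AddCommGroup M] [Module R M] [AddCommGroup N] [Module R N] (g : M →ₗ[R] N) :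
    LinearMap.range (g.baseChange A) = (LinearMap.range g).baseChange A := by
  apply le_antisymm
  · rintro _ ⟨x, rfl⟩
    induction x using TensorProduct.induction_on with
    | zero => simp
    | tmul a m => simpa using Submodule.tmul_mem_baseChange_of_mem a (LinearMap.mem_range_self g m)
    | add x y hx hy => rw [map_add]; exact Submodule.add_mem _ hx hy
  · rw [Submodule.baseChange]
    rintro _ ⟨x, rfl⟩
    induction x using TensorProduct.induction_on with
    | zero => simp
    | tmul a m =>
      obtain ⟨_, m, rfl⟩ := m
      exact ⟨a ⊗ₜ m, by simp⟩
    | add x y hx hy => rw [map_add]; exact Submodule.add_mem _ hx hy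

/-- Lemma 2.2.3 of the paper.
Let `R` be a commutative ring and `t ∈ R`.  If `(A_i, φ_{ji})` is a Mittag-Leffler directed
inverse system of `R`-modules, then the localized system `(A_i ⊗_R R[1/t])` is again
Mittag-Leffler; and if moreover `(A_i) ⊆ (B_i)` compatibly with the transition maps and
`(A_i) ⊨ (B_i)`, then `(A_i ⊗_R R[1/t]) ⊨ (B_i ⊗_R R[1/t])`. -/
theorem mittagLeffler_and_models_localization
    {R : Type*} [CommRing R] (t : R)
    {ι : Type*} [Preorder ι] [IsDirected ι (· ≤ ·)]
    (A : ι → Type*) [∀ i, AddCommGroup (A i)] [∀ i, Module R (A i)]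
    (B : ι → Type*) [∀ i, AddCommGroup (B i)] [∀ i, Module R (B i)]
    -- the transition maps of the two inverse systems
    (φA : ∀ {i j : ι}, i ≤ j → (A j →ₗ[R] A i))
    (φB : ∀ {i j : ι}, i ≤ j → (B j →ₗ[R] B i))
    (hφA_id : ∀ i : ι, φA (le_refl i) = LinearMap.id)
    (hφA_comp : ∀ {i j k : ι} (hij : i ≤ j) (hjk : j ≤ k),
      (φA hij).comp (φA hjk) = φA (hij.trans hjk))
    (hφB_id : ∀ i : ι, φB (le_refl i) = LinearMap.id)
    (hφB_comp : ∀ {i j k : ι} (hij : i ≤ j) (hjk : j ≤ k),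
      (φB hij).comp (φB hjk) = φB (hij.trans hjk))
    -- the compatible inclusions `A_i ⊆ B_i`
    (f : ∀ i : ι, A i →ₗ[R] B i)
    (hf_inj : ∀ i : ι, Function.Injective (f i))
    (hf_compat : ∀ {i j : ι} (h : i ≤ j), (f i).comp (φA h) = (φB h).comp (f j))
    -- `(A_i)` is Mittag-Leffler
    (hML : ∀ i : ι, ∃ j : ι, ∃ hij : i ≤ j, ∀ k : ι, ∀ hjk : j ≤ k,
      LinearMap.range (φA (hij.trans hjk)) = LinearMap.range (φA hij))
    -- `(A_i) ⊨ (B_i)`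
    (hmodels : ∀ i : ι, ∃ j : ι, ∃ hij : i ≤ j, ∀ k : ι, ∀ hjk : j ≤ k,
      LinearMap.range ((φB (hij.trans hjk)).comp (f k)) =
        LinearMap.range (φB (hij.trans hjk))) :
    -- the localized system `(A_i ⊗_R R[1/t])` is Mittag-Leffler
    (∀ i : ι, ∃ j : ι, ∃ hij : i ≤ j, ∀ k : ι, ∀ hjk : j ≤ k,
      LinearMap.range ((φA (hij.trans hjk)).baseChange (Localization.Away t)) =
        LinearMap.range ((φA hij).baseChange (Localization.Away t))) ∧
    -- and `(A_i ⊗_R R[1/t]) ⊨ (B_i ⊗_R R[1/t])`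
    (∀ i : ι, ∃ j : ι, ∃ hij : i ≤ j, ∀ k : ι, ∀ hjk : j ≤ k,
      LinearMap.range (((φB (hij.trans hjk)).baseChange (Localization.Away t)).comp
          ((f k).baseChange (Localization.Away t))) =
        LinearMap.range ((φB (hij.trans hjk)).baseChange (Localization.Away t))) := by
  constructor
  · intro i
    obtain ⟨j, hij, h⟩ := hML i
    exact ⟨j, hij, fun k hjk => by
      rw [range_baseChange', range_baseChange', h k hjk]⟩
  · intro i
    obtain ⟨j, hij, h⟩ := hmodels i
    exact ⟨j, hij, fun k hjk => by
      rw [← LinearMap.baseChange_comp, range_baseChange', range_baseChange', h k hjk]⟩
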